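/- Suppose smooth functions q, p, u, v, w, R of s satisfy the system: u' = -q², v' = -qp, w' = -p², (1+s²)q' = -(as+v)q + (β₀ - (2a-1)u)p, (1+s²)p' = -(γ₀ + (2a+1)w)q + (as+v)p, and (1+s²)R = (γ₀+(2a+1)w)q² + (β₀-(2a-1)u)p² - 2(as+v)qp, with all of q, p, u, v, w and (1+s²)R tending to 0 as s → ∞. Then the first integral (1+s²)R = 2av holds identically. -/

import Mathlib

open Filter

/-- First integral `(1+s²)R = 2av` for the Tracy–Widom coupled system of the Cauchy
unitary ensemble on the interval `(s,∞)`. -/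
theorem stmt7 (a β₀ γ₀ s₀ : ℝ) (ha : a ≠ 0)
    (q p u v w R : ℝ → ℝ)
    (hu : ∀ s ∈ Set.Ioi s₀, HasDerivAt u (-(q s) ^ 2) s)
    (hv : ∀ s ∈ Set.Ioi s₀, HasDerivAt v (-(q s * p s)) s)
    (hw : ∀ s ∈ Set.Ioi s₀, HasDerivAt w (-(p s) ^ 2) s)
    (hq : ∀ s ∈ Set.Ioi s₀, HasDerivAt q
      ((-(a * s + v s) * q s + (β₀ - (2 * a - 1) * u s) * p s) / (1 + s ^ 2)) s)
    (hp : ∀ s ∈ Set.Ioi s₀, HasDerivAt p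
      ((-(γ₀ + (2 * a + 1) * w s) * q s + (a * s + v s) * p s) / (1 + s ^ 2)) s)
    (hR : ∀ s ∈ Set.Ioi s₀, (1 + s ^ 2) * R s =
      (γ₀ + (2 * a + 1) * w s) * (q s) ^ 2 + (β₀ - (2 * a - 1) * u s) * (p s) ^ 2 -
        2 * (a * s + v s) * (q s * p s))
    (hq0 : Tendsto q atTop (nhds 0)) (hp0 : Tendsto p atTop (nhds 0))
    (hu0 : Tendsto u atTop (nhds 0)) (hv0 : Tendsto v atTop (nhds 0))
    (hw0 : Tendsto w atTop (nhds 0))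
    (hR0 : Tendsto (fun s => (1 + s ^ 2) * R s) atTop (nhds 0)) :
    ∀ s ∈ Set.Ioi s₀, (1 + s ^ 2) * R s = 2 * a * v s := by
  set G : ℝ → ℝ := fun s =>
    (γ₀ + (2 * a + 1) * w s) * (q s) ^ 2 + (β₀ - (2 * a - 1) * u s) * (p s) ^ 2 -
      2 * ((a * s + v s) * (q s * p s)) - 2 * a * v s with hG
  -- G has derivative 0 on Ioi s₀
  have hG' : ∀ s ∈ Set.Ioi s₀, HasDerivAt G 0 s := by
    intro s hs
    have hs2 : (1 : ℝ) + s ^ 2 ≠ 0 := by positivity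
    have hA : HasDerivAt (fun s => γ₀ + (2 * a + 1) * w s) ((2 * a + 1) * (-(p s) ^ 2)) s := by
      simpa using (show HasDerivAt (fun s => γ₀ + (2 * a + 1) * w s) _ s from (hasDerivAt_const s γ₀).add ((hw s hs).const_mul (2*a+1)))
    have hB : HasDerivAt (fun s => β₀ - (2 * a - 1) * u s) (-((2 * a - 1) * (-(q s) ^ 2))) s := by
      simpa using (show HasDerivAt (fun s => β₀ - (2 * a - 1) * u s) _ s from (hasDerivAt_const s β₀).sub ((hu s hs).const_mul (2*a-1)))
    have hC : HasDerivAt (fun s => a * s + v s) (a * 1 + -(q s * p s)) s :=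
      ((hasDerivAt_id s).const_mul a).add (hv s hs)
    have hq2 : HasDerivAt (fun s => (q s) ^ 2)
        (2 * (q s) ^ 1 * ((-(a * s + v s) * q s + (β₀ - (2 * a - 1) * u s) * p s) / (1 + s ^ 2))) s := by
      simpa using (show HasDerivAt (fun s => (q s) ^ 2) _ s from (hq s hs).pow 2)
    have hp2 : HasDerivAt (fun s => (p s) ^ 2)
        (2 * (p s) ^ 1 * ((-(γ₀ + (2 * a + 1) * w s) * q s + (a * s + v s) * p s) / (1 + s ^ 2))) s := by
      simpa using (show HasDerivAt (fun s => (p s) ^ 2) _ s from (hp s hs).pow 2)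
    have hqp : HasDerivAt (fun s => q s * p s)
        (((-(a * s + v s) * q s + (β₀ - (2 * a - 1) * u s) * p s) / (1 + s ^ 2)) * p s +
          q s * ((-(γ₀ + (2 * a + 1) * w s) * q s + (a * s + v s) * p s) / (1 + s ^ 2))) s :=
      (hq s hs).mul (hp s hs)
    have hD :
        HasDerivAt G
          (((2 * a + 1) * (-(p s) ^ 2) * (q s) ^ 2 +
              (γ₀ + (2 * a + 1) * w s) *
                (2 * (q s) ^ 1 * ((-(a * s + v s) * q s + (β₀ - (2 * a - 1) * u s) * p s) / (1 + s ^ 2))) +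
            ((-((2 * a - 1) * (-(q s) ^ 2))) * (p s) ^ 2 +
              (β₀ - (2 * a - 1) * u s) *
                (2 * (p s) ^ 1 * ((-(γ₀ + (2 * a + 1) * w s) * q s + (a * s + v s) * p s) / (1 + s ^ 2)))) -
            2 * ((a * 1 + -(q s * p s)) * (q s * p s) +
              (a * s + v s) *
                (((-(a * s + v s) * q s + (β₀ - (2 * a - 1) * u s) * p s) / (1 + s ^ 2)) * p s +
                  q s * ((-(γ₀ + (2 * a + 1) * w s) * q s + (a * s + v s) * p s) / (1 + s ^ 2))))) -
            2 * a * (-(q s * p s))) s := by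
      exact (((hA.mul hq2).add (hB.mul hp2)).sub (((hC.mul hqp).const_mul 2))).sub
        ((hv s hs).const_mul (2 * a))
    convert hD using 1
    field_simp
    ring
  -- G is eventually equal to (1+s²)R - 2av, hence tends to 0 at top
  have hGtop : Tendsto G atTop (nhds 0) := by
    have heq : G =ᶠ[atTop] fun s => (1 + s ^ 2) * R s - 2 * a * v s := by
      filter_upwards [eventually_gt_atTop s₀] with s hs
      simp only [hG]
      rw [hR s hs]; ring
    have : Tendsto (fun s => (1 + s ^ 2) * R s - 2 * a * v s) atTop (nhds (0 - 2 * a * 0)) :=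
      hR0.sub ((hv0.const_mul (2 * a)))
    simpa using this.congr' heq.symm
  -- G is constant on Ioi s₀
  have hconst : ∀ x ∈ Set.Ioi s₀, ∀ y, x ≤ y → G y = G x := by
    intro x hx y hxy
    have : ∀ z ∈ Set.Icc x y, G z = G x := by
      apply constant_of_has_deriv_right_zero
      · intro z hz
        exact ((hG' z (lt_of_lt_of_le hx hz.1)).continuousAt).continuousWithinAt
      · intro z hz
        exact ((hG' z (lt_of_lt_of_le hx hz.1)).hasDerivWithinAt)
    exact this y ⟨hxy, le_refl y⟩
  -- Hence G x = 0 for all x in Ioi s₀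
  have hGzero : ∀ x ∈ Set.Ioi s₀, G x = 0 := by
    intro x hx
    have h1 : Tendsto G atTop (nhds (G x)) := by
      have : G =ᶠ[atTop] fun _ => G x := by
        filter_upwards [eventually_ge_atTop x] with y hy
        exact hconst x hx y hy
      exact tendsto_const_nhds.congr' this.symm
    exact tendsto_nhds_unique h1 hGtop
  intro s hs
  have := hGzero s hs
  simp only [hG] at this
  rw [hR s hs]
  linear_combination this
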